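/- Let E be a finite set of resources with non-negative, non-decreasing latency functions f_e : ℕ → ℝ, and for each e ∈ E suppose the congestion splits as n_e = a_e + b_e with a_e, b_e ∈ ℕ. Define Φ = Σ_e Σ_{j=1}^{n_e} f_e(j), Φ_F = Σ_e Σ_{j=1}^{a_e} f_e(j + b_e), and Φ_{N∖F} = Σ_e Σ_{j=1}^{b_e} f_e(j + a_e). Then Φ ≤ Φ_F + Φ_{N∖F}. -/

import Mathlib

lemma aux5 (g : ℕ → ℝ) (hg : Monotone g) (a b : ℕ) :
    (∑ j ∈ Finset.Icc 1 (a + b), g j) ≤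
      (∑ j ∈ Finset.Icc 1 a, g (j + b)) + (∑ j ∈ Finset.Icc 1 b, g (j + a)) := by
  have hsplit : (∑ j ∈ Finset.Icc 1 (a + b), g j)
      = (∑ j ∈ Finset.Icc 1 a, g j) + (∑ j ∈ Finset.Icc 1 b, g (j + a)) := by
    rw [show Finset.Icc 1 (a+b) = Finset.Ioc 0 (a+b) from (Finset.Icc_add_one_left_eq_Ioc 0 _).symm,
        show Finset.Icc 1 a = Finset.Ioc 0 a from (Finset.Icc_add_one_left_eq_Ioc 0 _).symm,
        ← Finset.sum_Ioc_consecutive g (by omega : 0 ≤ a) (by omega : a ≤ a + b)]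
    congr 1
    · rw [show Finset.Ioc a (a+b) = Finset.map ⟨fun j => j + a, add_left_injective a⟩
        (Finset.Icc 1 b) from ?_, Finset.sum_map]
      · rfl
      · ext x; simp [Finset.mem_map]; constructor
        · intro h; exact ⟨x - a, by omega, by omega⟩
        · rintro ⟨y, hy, rfl⟩; omega
  rw [hsplit]
  gcongr with j hj
  exact hg (by omega)

theorem stmt5 {ε : Type*} (E : Finset ε) (f : ε → ℕ → ℝ)
    (hnonneg : ∀ e ∈ E, ∀ x, 0 ≤ f e x)
    (hmono : ∀ e ∈ E, Monotone (f e))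
    (nE a b : ε → ℕ) (hsplit : ∀ e ∈ E, nE e = a e + b e) :
    (∑ e ∈ E, ∑ j ∈ Finset.Icc 1 (nE e), f e j) ≤
      (∑ e ∈ E, ∑ j ∈ Finset.Icc 1 (a e), f e (j + b e)) +
      (∑ e ∈ E, ∑ j ∈ Finset.Icc 1 (b e), f e (j + a e)) := by
  rw [← Finset.sum_add_distrib]
  apply Finset.sum_le_sum
  intro e he
  rw [hsplit e he]
  exact aux5 (f e) (hmono e he) (a e) (b e)
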